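/- Let G be a simple graph. For every vertex P of G, the rank Weierstrass set of G at P is contained in the functional Weierstrass set of G at P, i.e., H_r(P) ⊆ H_f(P). -/
import Mathlib


open scoped Classical

/-- A graph: a finite connected multigraph with no loop edges, given by a symmetric
edge-multiplicity function on a finite nonempty vertex type. -/
structure Multigraph where
  V : Type
  [fintypeV : Fintype V]
  [decEqV : DecidableEq V]
  [nonemptyV : Nonempty V]
  adj : V → V → ℕ
  adj_symm : ∀ u v, adj u v = adj v u
  adj_loopless : ∀ v, adj v v = 0
  conn : ∀ u v, Relation.ReflTransGen (fun a b => adj a b ≠ 0) u v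

attribute [instance] Multigraph.fintypeV Multigraph.decEqV Multigraph.nonemptyV

namespace Multigraph

variable (G : Multigraph)

/-- A simple graph: no multiple edges and more than one vertex. -/
def Simple : Prop :=
  (∀ u v, G.adj u v ≤ 1) ∧ 1 < Fintype.card G.V

/-- The degree of a divisor. -/
def deg (D : G.V → ℤ) : ℤ := ∑ v, D v

/-- A divisor is effective if all its coefficients are nonnegative. -/
def Effective (D : G.V → ℤ) : Prop := ∀ v, 0 ≤ D v

/-- The Laplacian of an integer-valued function on the vertices. -/
def lap (f : G.V → ℤ) : G.V → ℤ := fun v => ∑ w, (G.adj v w : ℤ) * (f v - f w)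

/-- The linear system `|D|` is nonempty, i.e. `D` is linearly equivalent to an
effective divisor. -/
def LinNonempty (D : G.V → ℤ) : Prop :=
  ∃ f : G.V → ℤ, G.Effective (D - G.lap f)

/-- The Baker–Norine rank of a divisor: `-1` if `|D| = ∅`, otherwise the maximal
`k` such that `|D - E| ≠ ∅` for every effective divisor `E` of degree `k`. -/
noncomputable def rank (D : G.V → ℤ) : ℤ :=
  if G.LinNonempty D then
    ((sSup {k : ℕ | ∀ E : G.V → ℤ, G.Effective E → G.deg E = (k : ℤ) →
        G.LinNonempty (D - E)} : ℕ) : ℤ)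
  else -1

/-- The divisor `n • P`. -/
def pt (P : G.V) (n : ℤ) : G.V → ℤ := fun v => if v = P then n else 0

/-- The rank Weierstrass set of `G` at `P`. -/
def Hr (P : G.V) : Set ℕ :=
  {n : ℕ | G.rank (G.pt P ((n : ℤ) - 1)) < G.rank (G.pt P (n : ℤ))}

/-- The functional Weierstrass set of `G` at `P`: pole orders at `P` of functions
with a unique pole at `P`. -/
def Hf (P : G.V) : Set ℕ :=
  {n : ℕ | ∃ f : G.V → ℤ, G.lap f P = -(n : ℤ) ∧ ∀ Q, Q ≠ P → 0 ≤ G.lap f Q}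

/-- The number of edges joining `Q` to vertices outside `A`. -/
def outdeg (A : Finset G.V) (Q : G.V) : ℕ := ∑ R ∈ Aᶜ, G.adj Q R

/-- A divisor is `P`-reduced. -/
def Reduced (P : G.V) (D : G.V → ℤ) : Prop :=
  (∀ Q, Q ≠ P → 0 ≤ D Q) ∧
  ∀ A : Finset G.V, A.Nonempty → P ∉ A → ∃ Q ∈ A, D Q < (G.outdeg A Q : ℤ)

/-- `G` is the graph `B_n` with two vertices joined by `n` parallel edges. -/
def IsBanana (n : ℕ) : Prop :=
  Fintype.card G.V = 2 ∧ ∀ u v, u ≠ v → G.adj u v = n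

/-- `G` is the complete graph on `n` vertices. -/
def IsComplete (n : ℕ) : Prop :=
  Fintype.card G.V = n ∧ ∀ u v, u ≠ v → G.adj u v = 1

/-- `G` is the complete bipartite graph with parts `A` (of size `m`) and its
complement (of size `n`). -/
def IsCompleteBipartite (A : Finset G.V) (m n : ℕ) : Prop :=
  A.card = m ∧ Aᶜ.card = n ∧
  ∀ u v, G.adj u v = if (u ∈ A ∧ v ∉ A) ∨ (u ∉ A ∧ v ∈ A) then 1 else 0

/-- `λ_Q(k)`: the least `n` with `r(nQ) = k`. -/
noncomputable def lam (Q : G.V) (k : ℕ) : ℕ :=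
  sInf {n : ℕ | G.rank (G.pt Q (n : ℤ)) = (k : ℤ)}


lemma sum_sum_antisym (B : Finset G.V) (f : G.V → ℤ) :
    ∑ w ∈ B, ∑ x ∈ B, (G.adj w x : ℤ) * (f w - f x) = 0 := by
  simp only [mul_sub, Finset.sum_sub_distrib]
  rw [sub_eq_zero, Finset.sum_comm]
  refine Finset.sum_congr rfl fun v _ => Finset.sum_congr rfl fun w _ => ?_
  rw [G.adj_symm]

lemma sum_lap (f : G.V → ℤ) : ∑ v, G.lap f v = 0 := G.sum_sum_antisym Finset.univ f

lemma lap_sub (f g : G.V → ℤ) (v : G.V) :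
    G.lap (fun w => f w - g w) v = G.lap f v - G.lap g v := by
  unfold lap
  rw [← Finset.sum_sub_distrib]
  exact Finset.sum_congr rfl fun w _ => by ring

lemma lap_add (f g : G.V → ℤ) (v : G.V) :
    G.lap (fun w => f w + g w) v = G.lap f v + G.lap g v := by
  unfold lap
  rw [← Finset.sum_add_distrib]
  exact Finset.sum_congr rfl fun w _ => by ring

lemma lap_neg (f : G.V → ℤ) (v : G.V) :
    G.lap (fun w => -(f w)) v = -(G.lap f v) := by
  unfold lap
  rw [← Finset.sum_neg_distrib]
  exact Finset.sum_congr rfl fun w _ => by ring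

lemma lap_shift (f : G.V → ℤ) (c : ℤ) (v : G.V) :
    G.lap (fun w => f w - c) v = G.lap f v := by
  unfold lap
  exact Finset.sum_congr rfl fun w _ => by ring

lemma deg_pt (P : G.V) (c : ℤ) : G.deg (G.pt P c) = c := by
  simp [deg, pt]

lemma pt_self (P : G.V) (c : ℤ) : G.pt P c P = c := by simp [pt]

lemma pt_ne (P v : G.V) (c : ℤ) (h : v ≠ P) : G.pt P c v = 0 := by simp [pt, h]


lemma lipschitz (D f : G.V → ℤ) (hf : ∀ v, G.lap f v ≤ D v) (u v : G.V)
    (huv : G.adj v u ≠ 0) : f v ≤ f u + ∑ w, max (D w) 0 := by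
  have hCnn : (0:ℤ) ≤ ∑ w, max (D w) 0 :=
    Finset.sum_nonneg fun w _ => le_max_right _ _
  rcases le_or_gt (f v) (f u) with h | h
  · linarith
  · set B : Finset G.V := Finset.univ.filter fun w => f u < f w with hB
    have hvB : v ∈ B := by simp [hB, h]
    have huB : u ∉ B := by simp [hB]
    have hBc : ∀ x ∈ Bᶜ, f x ≤ f u := by
      intro x hx
      simp only [hB, Finset.mem_compl, Finset.mem_filter, Finset.mem_univ, true_and,
        not_lt] at hx
      exact hx
    have h1 : ∑ w ∈ B, G.lap f w ≤ ∑ w, max (D w) 0 := by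
      calc ∑ w ∈ B, G.lap f w ≤ ∑ w ∈ B, max (D w) 0 :=
            Finset.sum_le_sum fun w _ => le_trans (hf w) (le_max_left _ _)
        _ ≤ ∑ w, max (D w) 0 :=
            Finset.sum_le_sum_of_subset_of_nonneg (Finset.subset_univ B)
              (fun w _ _ => le_max_right _ _)
    have hsplit : ∑ w ∈ B, G.lap f w
        = ∑ w ∈ B, ∑ x ∈ B, (G.adj w x : ℤ) * (f w - f x)
          + ∑ w ∈ B, ∑ x ∈ Bᶜ, (G.adj w x : ℤ) * (f w - f x) := by
      rw [← Finset.sum_add_distrib]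
      exact Finset.sum_congr rfl fun w _ => (Finset.sum_add_sum_compl B _).symm
    have hterm : ∀ w ∈ B, ∀ x ∈ Bᶜ, (0:ℤ) ≤ (G.adj w x : ℤ) * (f w - f x) := by
      intro w hw x hx
      have hw' : f u < f w := by
        simp only [hB, Finset.mem_filter, Finset.mem_univ, true_and] at hw; exact hw
      have := hBc x hx
      have : (0:ℤ) ≤ f w - f x := by linarith
      positivity
    have h2 : f v - f u ≤ ∑ w ∈ B, ∑ x ∈ Bᶜ, (G.adj w x : ℤ) * (f w - f x) := by
      have hone : (1:ℤ) ≤ (G.adj v u : ℤ) := by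
        exact_mod_cast Nat.one_le_iff_ne_zero.2 huv
      have hvu : f v - f u ≤ (G.adj v u : ℤ) * (f v - f u) := by nlinarith
      calc f v - f u ≤ (G.adj v u : ℤ) * (f v - f u) := hvu
        _ ≤ ∑ x ∈ Bᶜ, (G.adj v x : ℤ) * (f v - f x) :=
            Finset.single_le_sum (f := fun x => (G.adj v x : ℤ) * (f v - f x))
              (fun x hx => hterm v hvB x hx) (Finset.mem_compl.2 huB)
        _ ≤ ∑ w ∈ B, ∑ x ∈ Bᶜ, (G.adj w x : ℤ) * (f w - f x) :=
            Finset.single_le_sum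
              (f := fun w => ∑ x ∈ Bᶜ, (G.adj w x : ℤ) * (f w - f x))
              (fun w hw => Finset.sum_nonneg fun x hx => hterm w hw x hx) hvB
    have hzero := G.sum_sum_antisym B f
    rw [hsplit, hzero, zero_add] at h1
    linarith

lemma bound_exists (D : G.V → ℤ) (P : G.V) (v : G.V) :
    ∃ b : ℤ, ∀ f : G.V → ℤ, (∀ w, G.lap f w ≤ D w) → f P = 0 → f v ≤ b := by
  have h := G.conn P v
  induction h with
  | refl => exact ⟨0, fun f _ hP => le_of_eq hP⟩
  | @tail b c hb hbc ih =>
      obtain ⟨bb, hbb⟩ := ih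
      refine ⟨bb + ∑ w, max (D w) 0, fun f hf hP => ?_⟩
      have hlip := G.lipschitz D f hf b c (by rw [G.adj_symm]; exact hbc)
      have := hbb f hf hP
      linarith

lemma lap_max_le (D f g : G.V → ℤ) (hf : ∀ v, G.lap f v ≤ D v)
    (hg : ∀ v, G.lap g v ≤ D v) :
    ∀ v, G.lap (fun w => max (f w) (g w)) v ≤ D v := by
  intro v
  rcases le_total (g v) (f v) with h | h
  · calc G.lap (fun w => max (f w) (g w)) v
        = ∑ w, (G.adj v w : ℤ) * (f v - max (f w) (g w)) := by
          unfold lap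
          exact Finset.sum_congr rfl fun w _ => by beta_reduce; rw [max_eq_left h]
      _ ≤ ∑ w, (G.adj v w : ℤ) * (f v - f w) :=
          Finset.sum_le_sum fun w _ =>
            mul_le_mul_of_nonneg_left
              (sub_le_sub_left (le_max_left _ _) _) (by positivity)
      _ = G.lap f v := rfl
      _ ≤ D v := hf v
  · calc G.lap (fun w => max (f w) (g w)) v
        = ∑ w, (G.adj v w : ℤ) * (g v - max (f w) (g w)) := by
          unfold lap
          exact Finset.sum_congr rfl fun w _ => by beta_reduce; rw [max_eq_right h]
      _ ≤ ∑ w, (G.adj v w : ℤ) * (g v - g w) :=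
          Finset.sum_le_sum fun w _ =>
            mul_le_mul_of_nonneg_left
              (sub_le_sub_left (le_max_right _ _) _) (by positivity)
      _ = G.lap g v := rfl
      _ ≤ D v := hg v

lemma main_contra (hG : G.Simple) (P : G.V) (D : G.V → ℤ)
    (h1 : ∃ f, ∀ v, G.lap f v ≤ D v)
    (h2 : ∀ f, (∀ v, G.lap f v ≤ D v) → G.lap f P = D P)
    (h3 : ∀ Q, Q ≠ P → ∃ f, ∀ v, G.lap f v + (if v = Q then 1 else 0) ≤ D v) :
    False := by
  classical
  set A : Set (G.V → ℤ) := {f | (∀ v, G.lap f v ≤ D v) ∧ f P = 0} with hA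
  obtain ⟨f₀, hf₀⟩ := h1
  have hA0 : (fun v => f₀ v - f₀ P) ∈ A :=
    ⟨fun v => by rw [G.lap_shift]; exact hf₀ v, by simp⟩
  -- a pointwise maximal admissible function
  have hmax : ∀ s : Finset G.V, ∃ h ∈ A, ∀ g ∈ A, ∀ v ∈ s, g v ≤ h v := by
    intro s
    induction s using Finset.induction with
    | empty => exact ⟨_, hA0, by simp⟩
    | @insert v s hvs ih =>
        obtain ⟨h, hhA, hh⟩ := ih
        obtain ⟨b, hb⟩ := G.bound_exists D P v
        obtain ⟨z, ⟨fz, hfzA, hfzv⟩, hub⟩ :=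
          Int.exists_greatest_of_bdd (P := fun z => ∃ f ∈ A, f v = z)
            ⟨b, fun z ⟨f, hfA, hfv⟩ => hfv ▸ hb f hfA.1 hfA.2⟩ ⟨_, _, hA0, rfl⟩
        refine ⟨fun w => max (h w) (fz w),
          ⟨G.lap_max_le D h fz hhA.1 hfzA.1, by simp [hhA.2, hfzA.2]⟩, ?_⟩
        intro g hgA w hw
        rcases Finset.mem_insert.1 hw with rfl | hw
        · exact le_trans (hub _ ⟨g, hgA, rfl⟩) (hfzv ▸ le_max_right _ _)
        · exact le_trans (hh g hgA w hw) (le_max_left _ _)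
  obtain ⟨fs, hfsA, hfs⟩ := hmax Finset.univ
  have hfs' : ∀ g ∈ A, ∀ v, g v ≤ fs v := fun g hg v => hfs g hg v (Finset.mem_univ v)
  have hν : ∀ v, 0 ≤ D v - G.lap fs v := fun v => by have := hfsA.1 v; linarith
  have hνP : G.lap fs P = D P := h2 fs hfsA.1
  -- Step 1: find Q ≠ P adjacent to P with ν Q = 0
  have hQex : ∃ Q, Q ≠ P ∧ G.adj Q P = 1 ∧ D Q - G.lap fs Q = 0 := by
    by_contra hcon
    push_neg at hcon
    have key : ∀ Q, Q ≠ P → (G.adj Q P : ℤ) ≤ D Q - G.lap fs Q := by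
      intro Q hQP
      have hle : G.adj Q P ≤ 1 := hG.1 Q P
      have h0 := hν Q
      rcases Nat.le_one_iff_eq_zero_or_eq_one.1 hle with h | h
      · rw [h]; simpa using h0
      · have hne := hcon Q hQP h
        rw [h]
        push_cast
        omega
    set χ : G.V → ℤ := fun v => if v = P then 0 else 1 with hχ
    have hχadd : ∀ v, G.lap (fun w => fs w + χ w) v = G.lap fs v + G.lap χ v :=
      G.lap_add fs χ
    have hlapχ : ∀ v, v ≠ P → G.lap χ v = (G.adj v P : ℤ) := by
      intro v hv
      unfold lap
      have : ∀ w, (G.adj v w : ℤ) * (χ v - χ w)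
          = if w = P then (G.adj v P : ℤ) else 0 := by
        intro w
        by_cases hw : w = P <;> simp [hχ, hv, hw]
      rw [Finset.sum_congr rfl fun w _ => this w]
      simp
    have hlapχP : G.lap χ P ≤ 0 := by
      apply Finset.sum_nonpos
      intro w _
      have : χ P - χ w ≤ 0 := by by_cases hw : w = P <;> simp [hχ, hw]
      have hc : (0:ℤ) ≤ (G.adj P w : ℤ) := by positivity
      exact mul_nonpos_of_nonneg_of_nonpos hc this
    have hmemA : (fun w => fs w + χ w) ∈ A := by
      constructor
      · intro v
        rw [hχadd v]
        by_cases hv : v = P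
        · rw [hv]
          have h1 := hfsA.1 P
          linarith [hlapχP]
        · rw [hlapχ v hv]
          have := key v hv
          linarith
      · simp [hχ, hfsA.2]
    obtain ⟨v, hv⟩ := Fintype.exists_ne_of_one_lt_card hG.2 P
    have hle := hfs' _ hmemA v
    simp only [hχ, if_neg hv] at hle
    omega
  -- Step 2: contradiction using h3 at Q
  obtain ⟨Q, hQP, hadj, hνQ⟩ := hQex
  obtain ⟨f₁, hf₁⟩ := h3 Q hQP
  have hf₁le : ∀ v, G.lap f₁ v ≤ D v := by
    intro v
    have h := hf₁ v
    by_cases hv : v = Q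
    · subst hv; simp at h; linarith
    · simp [hv] at h; linarith
  have hf₁A : (fun v => f₁ v - f₁ P) ∈ A :=
    ⟨fun v => by rw [G.lap_shift]; exact hf₁le v, by simp⟩
  set g : G.V → ℤ := fun v => (f₁ v - f₁ P) - fs v with hg
  have hgle : ∀ v, g v ≤ 0 := by
    intro v
    have := hfs' _ hf₁A v
    simp only [hg]
    linarith
  have hgP : g P = 0 := by simp [hg, hfsA.2]
  have hlapg : ∀ v, G.lap g v = G.lap f₁ v - G.lap fs v := by
    intro v
    rw [hg, G.lap_sub _ fs v, G.lap_shift]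
  have hlapf₁P : G.lap f₁ P = D P := h2 f₁ hf₁le
  have hlapgP : G.lap g P = 0 := by rw [hlapg, hlapf₁P, hνP, sub_self]
  -- all neighbors of P have g = 0
  have hexp : G.lap g P = ∑ w, (G.adj P w : ℤ) * (0 - g w) := by
    unfold lap
    exact Finset.sum_congr rfl fun w _ => by rw [hgP]
  have hterms : ∀ w ∈ Finset.univ, (0:ℤ) ≤ (G.adj P w : ℤ) * (0 - g w) := by
    intro w _
    have := hgle w
    have h1 : (0:ℤ) ≤ (G.adj P w : ℤ) := by positivity
    nlinarith
  have hall : ∀ w ∈ Finset.univ, (G.adj P w : ℤ) * (0 - g w) = 0 :=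
    (Finset.sum_eq_zero_iff_of_nonneg hterms).1 (by rw [← hexp, hlapgP])
  have hgQ : g Q = 0 := by
    have := hall Q (Finset.mem_univ Q)
    rw [G.adj_symm] at this
    rw [hadj] at this
    push_cast at this
    linarith
  -- contradiction at Q
  have hlapgQ : (0:ℤ) ≤ G.lap g Q := by
    have hexpQ : G.lap g Q = ∑ w, (G.adj Q w : ℤ) * (0 - g w) := by
      unfold lap
      exact Finset.sum_congr rfl fun w _ => by rw [hgQ]
    rw [hexpQ]
    apply Finset.sum_nonneg
    intro w _
    have := hgle w
    have h1 : (0:ℤ) ≤ (G.adj Q w : ℤ) := by positivity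
    nlinarith
  have hQ1 := hf₁ Q
  simp at hQ1
  have heq : G.lap f₁ Q = G.lap g Q + G.lap fs Q := by rw [hlapg]; ring
  linarith

lemma lin_of_sub (D H : G.V → ℤ) (hH : G.Effective H)
    (h : G.LinNonempty (D - H)) : G.LinNonempty D := by
  obtain ⟨f, hf⟩ := h
  refine ⟨f, fun v => ?_⟩
  have h1 := hf v
  have h2 := hH v
  simp only [Pi.sub_apply] at h1 ⊢
  linarith

lemma deg_sub (D E : G.V → ℤ) : G.deg (D - E) = G.deg D - G.deg E := by
  unfold deg
  simp [Pi.sub_apply, Finset.sum_sub_distrib]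

lemma lin_deg_nonneg (D : G.V → ℤ) (h : G.LinNonempty D) : 0 ≤ G.deg D := by
  obtain ⟨f, hf⟩ := h
  have h1 : 0 ≤ ∑ v, (D v - G.lap f v) :=
    Finset.sum_nonneg fun v _ => by simpa [Pi.sub_apply] using hf v
  have h2 := G.sum_lap f
  unfold deg
  rw [Finset.sum_sub_distrib] at h1
  linarith

lemma eff_pt (P : G.V) (k : ℕ) : G.Effective (G.pt P (k : ℤ)) := by
  intro v
  unfold pt
  split <;> simp

lemma lin_shift (P : G.V) (c : ℤ) (E f : G.V → ℤ)
    (h : ∀ v, 0 ≤ G.pt P c v - E v - G.lap f v)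
    (hP : 1 ≤ G.pt P c P - E P - G.lap f P) :
    G.LinNonempty (G.pt P (c - 1) - E) := by
  refine ⟨f, fun v => ?_⟩
  simp only [Pi.sub_apply]
  by_cases hv : v = P
  · rw [hv, G.pt_self]
    rw [G.pt_self] at hP
    linarith
  · have h1 := h v
    rw [G.pt_ne P v c hv] at h1
    rw [G.pt_ne P v _ hv]
    linarith

lemma rank_ge_neg_one (D : G.V → ℤ) : -1 ≤ G.rank D := by
  unfold rank
  split
  · have : (0:ℤ) ≤ ((sSup {k : ℕ | ∀ E : G.V → ℤ, G.Effective E → G.deg E = (k : ℤ) →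
        G.LinNonempty (D - E)} : ℕ) : ℤ) := Int.natCast_nonneg _
    linarith
  · exact le_refl _


end Multigraph

/-- `G` is the vertex gluing of `G₁` and `G₂` identifying `P₁` and `P₂` into `P`. -/
def IsVertexGluing (G G₁ G₂ : Multigraph) (P : G.V) (P₁ : G₁.V) (P₂ : G₂.V) : Prop :=
  ∃ (ι₁ : G₁.V → G.V) (ι₂ : G₂.V → G.V),
    Function.Injective ι₁ ∧ Function.Injective ι₂ ∧
    ι₁ P₁ = P ∧ ι₂ P₂ = P ∧
    (∀ a b, ι₁ a = ι₂ b → ι₁ a = P) ∧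
    (∀ v : G.V, (∃ a, ι₁ a = v) ∨ (∃ b, ι₂ b = v)) ∧
    (∀ a b, G.adj (ι₁ a) (ι₁ b) = G₁.adj a b) ∧
    (∀ a b, G.adj (ι₂ a) (ι₂ b) = G₂.adj a b) ∧
    (∀ a b, ι₁ a ≠ P → ι₂ b ≠ P → G.adj (ι₁ a) (ι₂ b) = 0)

/-- On a simple graph, the rank Weierstrass set is contained in the functional
Weierstrass set. -/
theorem Hr_subset_Hf (G : Multigraph) (hG : G.Simple) (P : G.V) :
    G.Hr P ⊆ G.Hf P := by
  intro n hn
  have hn' : G.rank (G.pt P ((n : ℤ) - 1)) < G.rank (G.pt P (n : ℤ)) := hn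
  -- |nP| is nonempty
  have hLn : G.LinNonempty (G.pt P (n : ℤ)) := by
    by_contra h
    have e2 : G.rank (G.pt P (n : ℤ)) = -1 := by unfold Multigraph.rank; rw [if_neg h]
    rw [e2] at hn'
    exact absurd hn' (not_lt.2 (G.rank_ge_neg_one _))
  set S : Set ℕ := {k : ℕ | ∀ E : G.V → ℤ, G.Effective E → G.deg E = (k : ℤ) →
      G.LinNonempty (G.pt P (n : ℤ) - E)} with hS
  have hbdd : BddAbove S := by
    refine ⟨n, fun k hk => ?_⟩
    have hlin := hk (G.pt P (k : ℤ)) (G.eff_pt P k) (G.deg_pt P (k : ℤ))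
    have hd := G.lin_deg_nonneg _ hlin
    rw [G.deg_sub, G.deg_pt, G.deg_pt] at hd
    exact_mod_cast le_of_sub_nonneg hd
  have h0S : 0 ∈ S := by
    intro E hE hdeg
    have hds : ∑ v, E v = 0 := by simpa [Multigraph.deg] using hdeg
    have hE0 : ∀ v, E v = 0 := fun v =>
      (Finset.sum_eq_zero_iff_of_nonneg (fun w _ => hE w)).1 hds v (Finset.mem_univ v)
    obtain ⟨f, hf⟩ := hLn
    refine ⟨f, fun v => ?_⟩
    have h1 := hf v
    simp only [Pi.sub_apply] at h1 ⊢
    rw [hE0 v]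
    linarith
  set k : ℕ := sSup S with hk
  have hkS : k ∈ S := Nat.sSup_mem ⟨0, h0S⟩ hbdd
  have hrk : G.rank (G.pt P (n : ℤ)) = (k : ℤ) := by
    unfold Multigraph.rank
    rw [if_pos hLn]
  -- a witness E₀ of degree k with |(n-1)P - E₀| empty
  have hE₀ex : ∃ E : G.V → ℤ, G.Effective E ∧ G.deg E = (k : ℤ) ∧
      ¬ G.LinNonempty (G.pt P ((n : ℤ) - 1) - E) := by
    by_cases hL' : G.LinNonempty (G.pt P ((n : ℤ) - 1))
    · set S' : Set ℕ := {k : ℕ | ∀ E : G.V → ℤ, G.Effective E → G.deg E = (k : ℤ) →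
          G.LinNonempty (G.pt P ((n : ℤ) - 1) - E)} with hS'
      have hbdd' : BddAbove S' := by
        refine ⟨n, fun k' hk' => ?_⟩
        have hlin := hk' (G.pt P (k' : ℤ)) (G.eff_pt P k') (G.deg_pt P (k' : ℤ))
        have hd := G.lin_deg_nonneg _ hlin
        rw [G.deg_sub, G.deg_pt, G.deg_pt] at hd
        have : (k' : ℤ) ≤ (n : ℤ) := by linarith
        exact_mod_cast this
      have hrk' : G.rank (G.pt P ((n : ℤ) - 1)) = ((sSup S' : ℕ) : ℤ) := by
        unfold Multigraph.rank
        rw [if_pos hL']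
      rw [hrk', hrk] at hn'
      have hlt : sSup S' < k := by exact_mod_cast hn'
      have hknS' : k ∉ S' := fun hmem => absurd (le_csSup hbdd' hmem) (not_le.2 hlt)
      rw [hS', Set.mem_setOf_eq] at hknS'
      push_neg at hknS'
      obtain ⟨E₀, hE₀e, hE₀d, hE₀n⟩ := hknS'
      exact ⟨E₀, hE₀e, hE₀d, hE₀n⟩
    · refine ⟨G.pt P (k : ℤ), G.eff_pt P k, G.deg_pt P (k : ℤ), fun hcon => hL' ?_⟩
      exact G.lin_of_sub _ _ (G.eff_pt P k) hcon
  obtain ⟨E₀, hE₀e, hE₀d, hE₀n⟩ := hE₀ex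
  -- minimize the value at P over all witnesses
  set T : Set ℕ := {m : ℕ | ∃ E : G.V → ℤ, G.Effective E ∧ G.deg E = (k : ℤ) ∧
      E P = (m : ℤ) ∧ ¬ G.LinNonempty (G.pt P ((n : ℤ) - 1) - E)} with hT
  have hTne : (E₀ P).toNat ∈ T :=
    ⟨E₀, hE₀e, hE₀d, (Int.toNat_of_nonneg (hE₀e P)).symm, hE₀n⟩
  obtain ⟨E, hEe, hEd, hEP, hEn⟩ := Nat.sInf_mem (⟨_, hTne⟩ : T.Nonempty)
  have hm0 : sInf T = 0 := by
    by_contra hm0ne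
    have hm1 : 1 ≤ sInf T := Nat.one_le_iff_ne_zero.2 hm0ne
    refine G.main_contra hG P (fun v => G.pt P (n : ℤ) v - E v) ?_ ?_ ?_
    · obtain ⟨f, hf⟩ := hkS E hEe hEd
      refine ⟨f, fun v => ?_⟩
      have h1 := hf v
      simp only [Pi.sub_apply] at h1
      show G.lap f v ≤ G.pt P (n : ℤ) v - E v
      linarith
    · intro f hf
      have hfv : ∀ v, G.lap f v ≤ G.pt P (n : ℤ) v - E v := hf
      show G.lap f P = G.pt P (n : ℤ) P - E P
      by_contra hne
      have h1 : 1 ≤ G.pt P (n : ℤ) P - E P - G.lap f P := by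
        rcases lt_or_eq_of_le (hfv P) with h | h
        · linarith
        · exact absurd h hne
      exact hEn (G.lin_shift P (n : ℤ) E f (fun v => by linarith [hfv v]) h1)
    · intro Q hQP
      set E' : G.V → ℤ :=
        fun v => E v + (if v = Q then 1 else 0) - (if v = P then 1 else 0) with hE'
      have hPQne : ¬ (P = Q) := fun h => hQP h.symm
      have hE'e : G.Effective E' := by
        intro v
        simp only [hE']
        by_cases hvP : v = P
        · rw [hvP]
          have h2 : (1 : ℤ) ≤ E P := by rw [hEP]; exact_mod_cast hm1
          simp [hPQne]
          linarith
        · by_cases hvQ : v = Q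
          · rw [hvQ]
            simp [hQP]
            linarith [hEe Q]
          · simp [hvP, hvQ]
            exact hEe v
      have hE'd : G.deg E' = (k : ℤ) := by
        unfold Multigraph.deg
        simp only [hE']
        rw [Finset.sum_sub_distrib, Finset.sum_add_distrib]
        simp [Finset.sum_ite_eq']
        exact hEd
      have hE'P : E' P = ((sInf T - 1 : ℕ) : ℤ) := by
        simp only [hE', if_pos rfl, if_neg hPQne]
        rw [hEP]
        push_cast [Nat.cast_sub hm1]
        ring
      have hnotT : (sInf T - 1) ∉ T := Nat.notMem_of_lt_sInf (by omega)
      have hlin : G.LinNonempty (G.pt P ((n : ℤ) - 1) - E') := by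
        by_contra hcon
        exact hnotT ⟨E', hE'e, hE'd, hE'P, hcon⟩
      obtain ⟨f, hf⟩ := hlin
      refine ⟨f, fun v => ?_⟩
      have h1 := hf v
      simp only [Pi.sub_apply, hE', Multigraph.pt] at h1
      show G.lap f v + (if v = Q then 1 else 0) ≤ G.pt P (n : ℤ) v - E v
      by_cases hvP : v = P
      · subst hvP
        simp [Multigraph.pt, hPQne] at h1 ⊢
        linarith
      · by_cases hvQ : v = Q
        · subst hvQ
          simp [Multigraph.pt, hvP, hQP] at h1 ⊢
          linarith
        · simp [Multigraph.pt, hvP, hvQ] at h1 ⊢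
          linarith
  -- now E P = 0; produce the function with pole exactly n at P
  rw [hm0] at hEP
  obtain ⟨f, hf⟩ := hkS E hEe hEd
  have hfv : ∀ v, 0 ≤ G.pt P (n : ℤ) v - E v - G.lap f v := fun v => by
    have := hf v
    simp only [Pi.sub_apply] at this
    linarith
  have hEP0 : E P = 0 := by exact_mod_cast hEP
  have hfP : G.lap f P = (n : ℤ) := by
    by_contra hne
    have h0 := hfv P
    rw [G.pt_self, hEP0] at h0
    have h1 : 1 ≤ G.pt P (n : ℤ) P - E P - G.lap f P := by
      rw [G.pt_self, hEP0]
      rcases lt_or_eq_of_le (by linarith : G.lap f P ≤ (n : ℤ)) with h | h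
      · linarith
      · exact absurd h hne
    exact hEn (G.lin_shift P (n : ℤ) E f hfv h1)
  show ∃ g : G.V → ℤ, G.lap g P = -(n : ℤ) ∧ ∀ Q, Q ≠ P → 0 ≤ G.lap g Q
  refine ⟨fun v => -(f v), ?_, ?_⟩
  · rw [G.lap_neg f P, hfP]
  · intro Q hQP
    rw [G.lap_neg f Q]
    have h1 := hfv Q
    rw [G.pt_ne P Q _ hQP] at h1
    have h2 := hEe Q
    linarith
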